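/- Let H be symmetric positive definite, L satisfy Lᵀ H + H L = 0, let G = ∑_{k=0}^s a_k (hL)^k with energy coefficients b_k, and suppose b_k = 0 for 1 ≤ k ≤ m-1. Then for every u, ‖Gu‖_H² - ‖u‖_H² = ∑_{k=m}^{s} b_k h^{2k} ‖L^k u‖_H², so |E_{n+1} - E_n| ≤ ½ h^{2m} ∑_{k=m}^{s} |b_k| h^{2(k-m)} ‖L^k u‖_H², i.e., the one-step energy error is O(h^{2m}). -/

import Mathlib

open Matrix Finset

private lemma sum_mulVec' {n : ℕ} {ι : Type*} (t : Finset ι) (M : ι → Matrix (Fin n) (Fin n) ℝ)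
    (v : Fin n → ℝ) : (∑ i ∈ t, M i) *ᵥ v = ∑ i ∈ t, (M i *ᵥ v) := by
  induction t using Finset.cons_induction with
  | empty => simp
  | cons i t hi ih => simp [Finset.sum_cons, Matrix.add_mulVec, ih]

private lemma mulVec_sum' {n : ℕ} {ι : Type*} (t : Finset ι) (M : Matrix (Fin n) (Fin n) ℝ)
    (v : ι → Fin n → ℝ) : M *ᵥ (∑ i ∈ t, v i) = ∑ i ∈ t, (M *ᵥ v i) := by
  induction t using Finset.cons_induction with
  | empty => simp
  | cons i t hi ih => simp [Finset.sum_cons, Matrix.mulVec_add, ih]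

private lemma dotProduct_sum' {n : ℕ} {ι : Type*} (t : Finset ι) (v : Fin n → ℝ)
    (w : ι → Fin n → ℝ) : v ⬝ᵥ (∑ i ∈ t, w i) = ∑ i ∈ t, v ⬝ᵥ w i := by
  induction t using Finset.cons_induction with
  | empty => simp
  | cons i t hi ih => simp [Finset.sum_cons, dotProduct_add, ih]

private lemma sum_dotProduct' {n : ℕ} {ι : Type*} (t : Finset ι) (v : Fin n → ℝ)
    (w : ι → Fin n → ℝ) : (∑ i ∈ t, w i) ⬝ᵥ v = ∑ i ∈ t, w i ⬝ᵥ v := by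
  induction t using Finset.cons_induction with
  | empty => simp
  | cons i t hi ih => simp [Finset.sum_cons, add_dotProduct, ih]

private lemma sum_even_helper (t : ℕ → ℝ) (hodd : ∀ p, Odd p → t p = 0) (s : ℕ) :
    ∑ p ∈ Finset.range (2 * s + 1), t p = ∑ k ∈ Finset.range (s + 1), t (2 * k) := by
  induction s with
  | zero => simp
  | succ s ih =>
    have h1 : 2 * (s + 1) + 1 = (2 * s + 1) + 1 + 1 := by ring
    rw [h1, Finset.sum_range_succ, Finset.sum_range_succ, ih,
      Finset.sum_range_succ (fun k => t (2 * k)) (s + 1),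
      hodd (2 * s + 1) ⟨s, by ring⟩]
    have h2 : 2 * s + 1 + 1 = 2 * (s + 1) := by ring
    rw [h2]; ring

private lemma regroup_helper (s : ℕ) (w : ℕ → ℕ → ℝ) :
    ∑ i ∈ Finset.range (s + 1), ∑ j ∈ Finset.range (s + 1), w i (i + j)
      = ∑ p ∈ Finset.range (2 * s + 1), ∑ i ∈ Finset.Icc (p - s) (min p s), w i p := by
  have e1 : ∑ i ∈ Finset.range (s + 1), ∑ j ∈ Finset.range (s + 1), w i (i + j)
      = ∑ x ∈ (Finset.range (s + 1)).sigma (fun _ => Finset.range (s + 1)), w x.1 (x.1 + x.2) :=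
    by rw [Finset.sum_sigma]
  have e2 : ∑ p ∈ Finset.range (2 * s + 1), ∑ i ∈ Finset.Icc (p - s) (min p s), w i p
      = ∑ x ∈ (Finset.range (2 * s + 1)).sigma (fun p => Finset.Icc (p - s) (min p s)), w x.2 x.1 :=
    by rw [Finset.sum_sigma]
  rw [e1, e2]
  refine Finset.sum_nbij' (fun x => ⟨x.1 + x.2, x.1⟩) (fun x => ⟨x.2, x.1 - x.2⟩)
    ?_ ?_ ?_ ?_ ?_
  · rintro ⟨i, j⟩ hx
    simp only [Finset.mem_sigma, Finset.mem_range, Finset.mem_Icc, le_min_iff] at hx ⊢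
    omega
  · rintro ⟨p, i⟩ hx
    simp only [Finset.mem_sigma, Finset.mem_range, Finset.mem_Icc, le_min_iff] at hx ⊢
    omega
  · rintro ⟨i, j⟩ hx
    simp only [Finset.mem_sigma, Finset.mem_range] at hx
    simp only [Sigma.mk.inj_iff, heq_eq_eq]
    exact ⟨trivial, by omega⟩
  · rintro ⟨p, i⟩ hx
    simp only [Finset.mem_sigma, Finset.mem_range, Finset.mem_Icc, le_min_iff] at hx
    simp only [Sigma.mk.inj_iff, heq_eq_eq]
    exact ⟨by omega, trivial⟩
  · rintro ⟨i, j⟩ hx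
    rfl

theorem energy_error_order {n : ℕ}
    (H L : Matrix (Fin n) (Fin n) ℝ)
    (hH : H.PosDef) (hHsymm : H.IsSymm)
    (hL : Lᵀ * H + H * L = 0)
    (s : ℕ) (a : ℕ → ℝ) (h : ℝ) (ha0 : a 0 = 1)
    (G : Matrix (Fin n) (Fin n) ℝ)
    (hG : G = ∑ k ∈ Finset.range (s + 1), a k • (h • L) ^ k)
    (b : ℕ → ℝ)
    (hb : ∀ k, b k = ∑ i ∈ Finset.Icc (max 0 (2 * k - s)) (min (2 * k) s),
      (-1 : ℝ) ^ (k + i) * a i * a (2 * k - i))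
    (m : ℕ) (hm1 : 1 ≤ m)
    (hbvanish : ∀ k, 1 ≤ k → k ≤ m - 1 → b k = 0)
    (u : Fin n → ℝ) :
    (G *ᵥ u) ⬝ᵥ (H *ᵥ (G *ᵥ u)) - u ⬝ᵥ (H *ᵥ u) =
        ∑ k ∈ Finset.Icc m s,
          b k * h ^ (2 * k) * ((L ^ k *ᵥ u) ⬝ᵥ (H *ᵥ (L ^ k *ᵥ u))) ∧
      |(1 / 2) * ((G *ᵥ u) ⬝ᵥ (H *ᵥ (G *ᵥ u))) - (1 / 2) * (u ⬝ᵥ (H *ᵥ u))| ≤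
        (1 / 2) * h ^ (2 * m) *
          ∑ k ∈ Finset.Icc m s,
            |b k| * h ^ (2 * (k - m)) * ((L ^ k *ᵥ u) ⬝ᵥ (H *ᵥ (L ^ k *ᵥ u))) := by
  have hLT : Lᵀ * H = -(H * L) := eq_neg_of_add_eq_zero_left hL
  have key : ∀ k : ℕ, (L ^ k)ᵀ * H = ((-1 : ℝ)) ^ k • (H * L ^ k) := by
    intro k
    induction k with
    | zero => simp
    | succ k ih =>
      rw [pow_succ, Matrix.transpose_mul, Matrix.mul_assoc, ih, Matrix.mul_smul,
        ← Matrix.mul_assoc, hLT, pow_succ]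
      rw [Matrix.neg_mul, Matrix.mul_assoc, ← pow_succ', smul_neg]
      simp [← pow_succ, mul_smul]
  have hsymm : ∀ v w : Fin n → ℝ, v ⬝ᵥ (H *ᵥ w) = w ⬝ᵥ (H *ᵥ v) := by
    intro v w
    rw [Matrix.dotProduct_mulVec, ← Matrix.mulVec_transpose, hHsymm.eq]
    exact dotProduct_comm _ _
  have trans_dot : ∀ (M : Matrix (Fin n) (Fin n) ℝ) (v w : Fin n → ℝ),
      (M *ᵥ v) ⬝ᵥ w = v ⬝ᵥ (Mᵀ *ᵥ w) := by
    intro M v w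
    rw [Matrix.dotProduct_mulVec, Matrix.vecMul_transpose]
  set f : ℕ → ℝ := fun p => u ⬝ᵥ ((H * L ^ p) *ᵥ u) with hf
  have f_odd : ∀ p, Odd p → f p = 0 := by
    intro p hp
    have h1 : f p = (-1 : ℝ) ^ p * f p := by
      calc f p = u ⬝ᵥ (H *ᵥ (L ^ p *ᵥ u)) := by rw [hf]; simp [Matrix.mulVec_mulVec]
        _ = (L ^ p *ᵥ u) ⬝ᵥ (H *ᵥ u) := hsymm _ _
        _ = u ⬝ᵥ ((L ^ p)ᵀ *ᵥ (H *ᵥ u)) := trans_dot _ _ _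
        _ = u ⬝ᵥ (((L ^ p)ᵀ * H) *ᵥ u) := by rw [Matrix.mulVec_mulVec]
        _ = (-1 : ℝ) ^ p * f p := by
            rw [key p, Matrix.smul_mulVec, dotProduct_smul, smul_eq_mul]
    rw [hp.neg_one_pow] at h1
    linarith
  have Q_eq : ∀ k, (L ^ k *ᵥ u) ⬝ᵥ (H *ᵥ (L ^ k *ᵥ u)) = (-1 : ℝ) ^ k * f (2 * k) := by
    intro k
    calc (L ^ k *ᵥ u) ⬝ᵥ (H *ᵥ (L ^ k *ᵥ u))
        = u ⬝ᵥ ((L ^ k)ᵀ *ᵥ (H *ᵥ (L ^ k *ᵥ u))) := trans_dot _ _ _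
      _ = u ⬝ᵥ ((((L ^ k)ᵀ * H) * L ^ k) *ᵥ u) := by
          rw [Matrix.mulVec_mulVec, Matrix.mulVec_mulVec, Matrix.mul_assoc]
      _ = (-1 : ℝ) ^ k * f (2 * k) := by
          rw [key k, Matrix.smul_mul, Matrix.smul_mulVec, dotProduct_smul,
            smul_eq_mul, Matrix.mul_assoc, ← pow_add, two_mul]
  have cross : ∀ i j : ℕ, (L ^ i *ᵥ u) ⬝ᵥ (H *ᵥ (L ^ j *ᵥ u)) = (-1 : ℝ) ^ i * f (i + j) := by
    intro i j
    calc (L ^ i *ᵥ u) ⬝ᵥ (H *ᵥ (L ^ j *ᵥ u))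
        = u ⬝ᵥ ((L ^ i)ᵀ *ᵥ (H *ᵥ (L ^ j *ᵥ u))) := trans_dot _ _ _
      _ = u ⬝ᵥ ((((L ^ i)ᵀ * H) * L ^ j) *ᵥ u) := by
          rw [Matrix.mulVec_mulVec, Matrix.mulVec_mulVec, Matrix.mul_assoc]
      _ = (-1 : ℝ) ^ i * f (i + j) := by
          rw [key i, Matrix.smul_mul, Matrix.smul_mulVec, dotProduct_smul,
            smul_eq_mul, Matrix.mul_assoc, ← pow_add]
  have hG' : G = ∑ k ∈ Finset.range (s + 1), (a k * h ^ k) • L ^ k := by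
    rw [hG]
    exact Finset.sum_congr rfl fun k _ => by rw [smul_pow, smul_smul]
  have hGu : G *ᵥ u = ∑ i ∈ Finset.range (s + 1), (a i * h ^ i) • (L ^ i *ᵥ u) := by
    rw [hG', sum_mulVec']
    exact Finset.sum_congr rfl fun i _ => Matrix.smul_mulVec _ _ _
  have hHGu : H *ᵥ (G *ᵥ u) = ∑ j ∈ Finset.range (s + 1), (a j * h ^ j) • (H *ᵥ (L ^ j *ᵥ u)) := by
    rw [hGu, mulVec_sum']
    exact Finset.sum_congr rfl fun j _ => Matrix.mulVec_smul _ _ _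
  have expand : (G *ᵥ u) ⬝ᵥ (H *ᵥ (G *ᵥ u))
      = ∑ i ∈ Finset.range (s + 1), ∑ j ∈ Finset.range (s + 1),
          (((-1 : ℝ) ^ i * a i * a ((i + j) - i)) * (h ^ (i + j) * f (i + j))) := by
    rw [hHGu, hGu, sum_dotProduct']
    refine Finset.sum_congr rfl fun i hi => ?_
    rw [smul_dotProduct, dotProduct_sum', smul_eq_mul, Finset.mul_sum]
    refine Finset.sum_congr rfl fun j hj => ?_
    rw [dotProduct_smul, smul_eq_mul, cross i j, Nat.add_sub_cancel_left, pow_add]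
    ring
  rw [regroup_helper s (fun i p => ((-1 : ℝ) ^ i * a i * a (p - i)) * (h ^ p * f p))] at expand
  have expand2 : (G *ᵥ u) ⬝ᵥ (H *ᵥ (G *ᵥ u))
      = ∑ p ∈ Finset.range (2 * s + 1),
          (∑ i ∈ Finset.Icc (p - s) (min p s), (-1 : ℝ) ^ i * a i * a (p - i)) * (h ^ p * f p) := by
    rw [expand]
    exact Finset.sum_congr rfl fun p _ => (Finset.sum_mul _ _ _).symm
  have todd : ∀ p, Odd p →
      (∑ i ∈ Finset.Icc (p - s) (min p s), (-1 : ℝ) ^ i * a i * a (p - i)) * (h ^ p * f p) = 0 := by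
    intro p hp
    rw [f_odd p hp]
    ring
  rw [sum_even_helper _ todd s] at expand2
  have hbk : ∀ k, b k = (-1 : ℝ) ^ k *
      ∑ i ∈ Finset.Icc (2 * k - s) (min (2 * k) s), (-1 : ℝ) ^ i * a i * a (2 * k - i) := by
    intro k
    rw [hb k, Nat.zero_max, Finset.mul_sum]
    exact Finset.sum_congr rfl fun i _ => by rw [pow_add]; ring
  have main : (G *ᵥ u) ⬝ᵥ (H *ᵥ (G *ᵥ u))
      = ∑ k ∈ Finset.range (s + 1),
          b k * h ^ (2 * k) * ((L ^ k *ᵥ u) ⬝ᵥ (H *ᵥ (L ^ k *ᵥ u))) := by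
    rw [expand2]
    refine Finset.sum_congr rfl fun k _ => ?_
    rw [Q_eq k, hbk k]
    have h2 : ((-1 : ℝ) ^ k) * ((-1 : ℝ) ^ k) = 1 := by
      rw [← pow_add]
      exact Even.neg_one_pow ⟨k, by ring⟩
    linear_combination (-(∑ i ∈ Finset.Icc (2 * k - s) (min (2 * k) s),
      (-1 : ℝ) ^ i * a i * a (2 * k - i)) * h ^ (2 * k) * f (2 * k)) * h2
  -- part 1
  have hQnonneg : ∀ k : ℕ, 0 ≤ (L ^ k *ᵥ u) ⬝ᵥ (H *ᵥ (L ^ k *ᵥ u)) := by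
    intro k
    simpa using hH.posSemidef.dotProduct_mulVec_nonneg (L ^ k *ᵥ u)
  have hb0 : b 0 = 1 := by
    rw [hb 0]
    simp [ha0]
  have hrange : Finset.range (s + 1) = insert 0 (Finset.Ioc 0 s) := by
    ext x
    simp only [Finset.mem_range, Finset.mem_insert, Finset.mem_Ioc]
    omega
  have hsplit : ∑ k ∈ Finset.range (s + 1),
        b k * h ^ (2 * k) * ((L ^ k *ᵥ u) ⬝ᵥ (H *ᵥ (L ^ k *ᵥ u)))
      = u ⬝ᵥ (H *ᵥ u) + ∑ k ∈ Finset.Ioc 0 s,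
          b k * h ^ (2 * k) * ((L ^ k *ᵥ u) ⬝ᵥ (H *ᵥ (L ^ k *ᵥ u))) := by
    rw [hrange, Finset.sum_insert (by simp)]
    congr 1
    simp [hb0, Matrix.one_mulVec]
  have hIoc : ∑ k ∈ Finset.Ioc 0 s, b k * h ^ (2 * k) * ((L ^ k *ᵥ u) ⬝ᵥ (H *ᵥ (L ^ k *ᵥ u)))
      = ∑ k ∈ Finset.Icc m s, b k * h ^ (2 * k) * ((L ^ k *ᵥ u) ⬝ᵥ (H *ᵥ (L ^ k *ᵥ u))) := by
    refine (Finset.sum_subset ?_ ?_).symm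
    · intro x hx
      simp only [Finset.mem_Icc] at hx
      simp only [Finset.mem_Ioc]
      omega
    · intro x hx hnx
      simp only [Finset.mem_Ioc] at hx
      simp only [Finset.mem_Icc] at hnx
      rw [hbvanish x (by omega) (by omega)]
      ring
  have part1 : (G *ᵥ u) ⬝ᵥ (H *ᵥ (G *ᵥ u)) - u ⬝ᵥ (H *ᵥ u) =
      ∑ k ∈ Finset.Icc m s, b k * h ^ (2 * k) * ((L ^ k *ᵥ u) ⬝ᵥ (H *ᵥ (L ^ k *ᵥ u))) := by
    rw [main, hsplit, hIoc]
    ring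
  refine ⟨part1, ?_⟩
  have habs : |(1 / 2 : ℝ) * ((G *ᵥ u) ⬝ᵥ (H *ᵥ (G *ᵥ u))) - (1 / 2) * (u ⬝ᵥ (H *ᵥ u))|
      = (1 / 2) * |∑ k ∈ Finset.Icc m s,
          b k * h ^ (2 * k) * ((L ^ k *ᵥ u) ⬝ᵥ (H *ᵥ (L ^ k *ᵥ u)))| := by
    rw [← part1, ← mul_sub, abs_mul]
    norm_num
  rw [habs]
  have hRHS : (1 / 2 : ℝ) * h ^ (2 * m) *
        ∑ k ∈ Finset.Icc m s,
          |b k| * h ^ (2 * (k - m)) * ((L ^ k *ᵥ u) ⬝ᵥ (H *ᵥ (L ^ k *ᵥ u)))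
      = (1 / 2) * ∑ k ∈ Finset.Icc m s,
          |b k| * h ^ (2 * k) * ((L ^ k *ᵥ u) ⬝ᵥ (H *ᵥ (L ^ k *ᵥ u))) := by
    rw [mul_assoc, Finset.mul_sum]
    congr 1
    refine Finset.sum_congr rfl fun k hk => ?_
    simp only [Finset.mem_Icc] at hk
    have : h ^ (2 * m) * h ^ (2 * (k - m)) = h ^ (2 * k) := by
      rw [← pow_add]
      congr 1
      omega
    calc h ^ (2 * m) * (|b k| * h ^ (2 * (k - m)) * ((L ^ k *ᵥ u) ⬝ᵥ (H *ᵥ (L ^ k *ᵥ u))))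
        = |b k| * (h ^ (2 * m) * h ^ (2 * (k - m))) * ((L ^ k *ᵥ u) ⬝ᵥ (H *ᵥ (L ^ k *ᵥ u))) := by
          ring
      _ = _ := by rw [this]
  rw [hRHS]
  gcongr
  calc |∑ k ∈ Finset.Icc m s, b k * h ^ (2 * k) * ((L ^ k *ᵥ u) ⬝ᵥ (H *ᵥ (L ^ k *ᵥ u)))|
      ≤ ∑ k ∈ Finset.Icc m s, |b k * h ^ (2 * k) * ((L ^ k *ᵥ u) ⬝ᵥ (H *ᵥ (L ^ k *ᵥ u)))| :=
        Finset.abs_sum_le_sum_abs _ _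
    _ = ∑ k ∈ Finset.Icc m s, |b k| * h ^ (2 * k) * ((L ^ k *ᵥ u) ⬝ᵥ (H *ᵥ (L ^ k *ᵥ u))) := by
        refine Finset.sum_congr rfl fun k _ => ?_
        rw [abs_mul, abs_mul]
        have h1 : |h ^ (2 * k)| = h ^ (2 * k) := by
          have : h ^ (2 * k) = h ^ k * h ^ k := by rw [two_mul, pow_add]
          rw [this, abs_of_nonneg (mul_self_nonneg _)]
        rw [h1, abs_of_nonneg (hQnonneg k)]
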